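/- Let T be a set and 𝒜 a collection of subsets of T containing ∅, closed under binary intersections, and such that 𝒜 \ {∅} satisfies the SHAPE condition. Let h : Set T → ℝ with h(∅) = 0. Then there exists a function Δ : Set T → ℝ such that Δ(A) = h(A) for all A ∈ 𝒜 and Δ(U₁ ∪ U₂) = Δ(U₁) + Δ(U₂) for all disjoint U₁, U₂ ∈ 𝒞(u); moreover, any two functions with these two properties agree on all of 𝒞(u). -/

import Mathlib

/-- The class `𝒞` of increment sets: sets of the form `A₀ \ (A₁ ∪ ⋯ ∪ A_n)`
with `n ∈ ℕ` and `A₀, …, A_n ∈ 𝒜`. -/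
def classC {T : Type*} (𝒜 : Set (Set T)) : Set (Set T) :=
  {C | ∃ (A₀ : Set T) (n : ℕ) (As : Fin n → Set T),
    A₀ ∈ 𝒜 ∧ (∀ i, As i ∈ 𝒜) ∧ C = A₀ \ ⋃ i, As i}

/-- The class `𝒞(u)` of finite unions of elements of `𝒞`. -/
def classCu {T : Type*} (𝒜 : Set (Set T)) : Set (Set T) :=
  {U | ∃ (n : ℕ) (Cs : Fin n → Set T), (∀ i, Cs i ∈ classC 𝒜) ∧ U = ⋃ i, Cs i}

open Set

section Aux

variable {T : Type*} {𝒜 : Set (Set T)}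

/-- list-indexed membership characterization of classC -/
lemma mem_classC_list {A₀ : Set T} (hA : A₀ ∈ 𝒜) (l : List (Set T))
    (hl : ∀ B ∈ l, B ∈ 𝒜) :
    A₀ \ (⋃ B ∈ l, B) ∈ classC 𝒜 := by
  refine ⟨A₀, l.length, l.get, hA, fun i => hl _ (l.get_mem i), ?_⟩
  congr 1
  ext x
  simp [List.mem_iff_get]

lemma classC_elim {C : Set T} (hC : C ∈ classC 𝒜) :
    ∃ A₀ ∈ 𝒜, ∃ l : List (Set T), (∀ B ∈ l, B ∈ 𝒜) ∧ C = A₀ \ (⋃ B ∈ l, B) := by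
  obtain ⟨A₀, n, As, h1, h2, h3⟩ := hC
  refine ⟨A₀, h1, List.ofFn As, ?_, ?_⟩
  · intro B hB
    obtain ⟨i, rfl⟩ := List.mem_ofFn.1 hB
    exact h2 i
  · rw [h3]
    congr 1
    ext x
    simp [List.mem_ofFn]

lemma mem_classC_of_A {A : Set T} (hA : A ∈ 𝒜) : A ∈ classC 𝒜 := by
  have := mem_classC_list hA [] (by simp)
  simpa using this

lemma classC_inter_A {C X : Set T} (hC : C ∈ classC 𝒜) (hX : X ∈ 𝒜)
    (hinter : ∀ A ∈ 𝒜, ∀ B ∈ 𝒜, A ∩ B ∈ 𝒜) : X ∩ C ∈ classC 𝒜 := by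
  obtain ⟨A₀, hA₀, l, hl, rfl⟩ := classC_elim hC
  have := mem_classC_list (hinter X hX A₀ hA₀) l hl
  have e : X ∩ (A₀ \ ⋃ B ∈ l, B) = (X ∩ A₀) \ (⋃ B ∈ l, B) := by
    ext x; simp; tauto
  rw [e]; exact this

lemma classC_diff_A {C X : Set T} (hC : C ∈ classC 𝒜) (hX : X ∈ 𝒜) :
    C \ X ∈ classC 𝒜 := by
  obtain ⟨A₀, hA₀, l, hl, rfl⟩ := classC_elim hC
  have := mem_classC_list hA₀ (X :: l) (by
    intro B hB; rcases List.mem_cons.1 hB with rfl | hB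
    · exact hX
    · exact hl _ hB)
  have e : (A₀ \ ⋃ B ∈ l, B) \ X = A₀ \ (⋃ B ∈ (X :: l), B) := by
    ext x; simp; tauto
  rw [e]; exact this

lemma classCu_iff_finset {U : Set T} :
    U ∈ classCu 𝒜 ↔ ∃ S : Finset (Set T), ↑S ⊆ classC 𝒜 ∧ U = ⋃₀ ↑S := by
  classical
  constructor
  · rintro ⟨n, Cs, hCs, rfl⟩
    refine ⟨Finset.image Cs Finset.univ, ?_, ?_⟩
    · intro C hC
      simp only [Finset.coe_image, Finset.coe_univ, image_univ] at hC
      obtain ⟨i, rfl⟩ := hC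
      exact hCs i
    · ext x; simp
  · rintro ⟨S, hS, rfl⟩
    refine ⟨S.card, fun i => (S.equivFin.symm i : Set T), fun i => hS (S.equivFin.symm i).2, ?_⟩
    ext x
    simp only [mem_sUnion, mem_iUnion]
    constructor
    · rintro ⟨C, hC, hx⟩
      exact ⟨S.equivFin ⟨C, hC⟩, by simpa using hx⟩
    · rintro ⟨i, hx⟩
      exact ⟨_, (S.equivFin.symm i).2, hx⟩

lemma sUnion_mem_classCu {S : Finset (Set T)} (hS : ↑S ⊆ classC 𝒜) :
    ⋃₀ ↑S ∈ classCu 𝒜 :=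
  classCu_iff_finset.2 ⟨S, hS, rfl⟩

lemma classC_subset_classCu {C : Set T} (hC : C ∈ classC 𝒜) : C ∈ classCu 𝒜 := by
  have := sUnion_mem_classCu (S := {C}) (by simpa using hC)
  simpa using this

lemma sdiff_sUnion_mem_classC {A : Set T} (hA : A ∈ 𝒜) {S : Finset (Set T)}
    (hS : ↑S ⊆ 𝒜) : A \ ⋃₀ ↑S ∈ classC 𝒜 := by
  have := mem_classC_list hA S.toList (fun B hB => hS (by simpa using hB))
  have e : (⋃ B ∈ S.toList, B) = ⋃₀ ↑S := by
    ext x; simp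
  rwa [e] at this

end Aux

section Disj

variable {T : Type*} {𝒜 : Set (Set T)}

/-- Core partition lemma: `C \ (B₀ \ ⋃ l)` is a finite disjoint union of elements of `classC`. -/
lemma core_partition (hinter : ∀ A ∈ 𝒜, ∀ B ∈ 𝒜, A ∩ B ∈ 𝒜)
    (l : List (Set T)) (hl : ∀ B ∈ l, B ∈ 𝒜) :
    ∀ (C : Set T), C ∈ classC 𝒜 → ∀ (B₀ : Set T), B₀ ∈ 𝒜 →
    ∃ S : Finset (Set T), ↑S ⊆ classC 𝒜 ∧ (↑S : Set (Set T)).Pairwise Disjoint ∧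
      ⋃₀ ↑S = C \ (B₀ \ ⋃ B ∈ l, B) := by
  classical
  induction l with
  | nil =>
    intro C hC B₀ hB₀
    refine ⟨{C \ B₀}, by simpa using classC_diff_A hC hB₀, by simp, ?_⟩
    simp
  | cons B l ih =>
    intro C hC B₀ hB₀
    have hB : B ∈ 𝒜 := hl B (by simp)
    have hl' : ∀ B' ∈ l, B' ∈ 𝒜 := fun B' hB' => hl B' (by simp [hB'])
    obtain ⟨S', hS'sub, hS'dis, hS'un⟩ := ih hl' (C \ B) (classC_diff_A hC hB) B₀ hB₀
    refine ⟨insert (C ∩ B) S', ?_, ?_, ?_⟩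
    · intro X hX
      simp only [Finset.coe_insert, mem_insert_iff] at hX
      rcases hX with rfl | hX
      · have := classC_inter_A hC hB hinter
        rwa [Set.inter_comm] at this
      · exact hS'sub hX
    · intro X hX Y hY hXY
      simp only [Finset.coe_insert, mem_insert_iff] at hX hY
      have hsub : ∀ Z ∈ S', Z ⊆ (C \ B) := by
        intro Z hZ
        intro x hx
        have : x ∈ ⋃₀ (↑S' : Set (Set T)) := ⟨Z, hZ, hx⟩
        rw [hS'un] at this
        exact this.1
      rcases hX with rfl | hX <;> rcases hY with rfl | hY
      · exact absurd rfl hXY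
      · exact Set.disjoint_left.2 fun x hx hx' => (hsub Y hY hx').2 hx.2
      · exact Set.disjoint_left.2 fun x hx hx' => (hsub X hX hx).2 hx'.2
      · exact hS'dis hX hY hXY
    · rw [Finset.coe_insert, sUnion_insert, hS'un]
      obtain ⟨A₀, hA₀, l₀, hl₀, rfl⟩ := classC_elim hC
      ext x
      simp only [mem_union, mem_inter_iff, mem_diff, mem_iUnion, List.mem_cons]
      constructor
      · rintro (⟨⟨hx1, hx2⟩, hx3⟩ | ⟨⟨⟨hx1, hx2⟩, hx3⟩, hx4⟩)
        · refine ⟨⟨hx1, hx2⟩, fun hc => hc.2 ⟨B, Or.inl rfl, hx3⟩⟩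
        · refine ⟨⟨hx1, hx2⟩, fun hc => ?_⟩
          exact hx4 ⟨hc.1, fun hc2 => hc.2 (by
            obtain ⟨B', hB', hxB'⟩ := hc2
            exact ⟨B', Or.inr hB', hxB'⟩)⟩
      · rintro ⟨⟨hx1, hx2⟩, hx3⟩
        by_cases hxB : x ∈ B
        · exact Or.inl ⟨⟨hx1, hx2⟩, hxB⟩
        · refine Or.inr ⟨⟨⟨hx1, hx2⟩, hxB⟩, fun hc => hx3 ⟨hc.1, fun hc2 => ?_⟩⟩
          obtain ⟨B', hB'mem, hxB'⟩ := hc2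
          rcases hB'mem with rfl | hB'mem
          · exact hxB hxB'
          · exact hc.2 ⟨B', hB'mem, hxB'⟩

/-- `C \ D` for `C, D ∈ classC` is a disjoint finite union of `classC` sets. -/
lemma diff_classC_partition (hinter : ∀ A ∈ 𝒜, ∀ B ∈ 𝒜, A ∩ B ∈ 𝒜)
    {C D : Set T} (hC : C ∈ classC 𝒜) (hD : D ∈ classC 𝒜) :
    ∃ S : Finset (Set T), ↑S ⊆ classC 𝒜 ∧ (↑S : Set (Set T)).Pairwise Disjoint ∧
      ⋃₀ ↑S = C \ D := by
  obtain ⟨B₀, hB₀, l, hl, rfl⟩ := classC_elim hD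
  exact core_partition hinter l hl C hC B₀ hB₀

end Disj

section Disj2

variable {T : Type*} {𝒜 : Set (Set T)}

/-- Subtracting a finite union of `classC` sets from a disjoint union of `classC` sets. -/
lemma sdiff_partition (hinter : ∀ A ∈ 𝒜, ∀ B ∈ 𝒜, A ∩ B ∈ 𝒜)
    (Sd : Finset (Set T)) (hSd : ↑Sd ⊆ classC 𝒜) :
    ∀ S₀ : Finset (Set T), ↑S₀ ⊆ classC 𝒜 → (↑S₀ : Set (Set T)).Pairwise Disjoint →
    ∃ S : Finset (Set T), ↑S ⊆ classC 𝒜 ∧ (↑S : Set (Set T)).Pairwise Disjoint ∧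
      ⋃₀ ↑S = ⋃₀ (↑S₀ : Set (Set T)) \ ⋃₀ (↑Sd : Set (Set T)) := by
  classical
  induction Sd using Finset.induction_on with
  | empty =>
    intro S₀ h1 h2
    exact ⟨S₀, h1, h2, by simp⟩
  | @insert D Sd hDnot ih =>
    intro S₀ h1 h2
    have hD : D ∈ classC 𝒜 := hSd (by simp)
    have hSd' : ↑Sd ⊆ classC 𝒜 := fun X hX => hSd (by simp [hX])
    -- For each E ∈ S₀, partition E \ D
    set F : Set T → Finset (Set T) := fun E =>
      if h : E ∈ classC 𝒜 then (diff_classC_partition hinter h hD).choose else ∅ with hF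
    have hFspec : ∀ E ∈ S₀, ↑(F E) ⊆ classC 𝒜 ∧ (↑(F E) : Set (Set T)).Pairwise Disjoint ∧
        ⋃₀ ↑(F E) = E \ D := by
      intro E hE
      have hEc : E ∈ classC 𝒜 := h1 hE
      simp only [hF, dif_pos hEc]
      exact (diff_classC_partition hinter hEc hD).choose_spec
    set S₁ : Finset (Set T) := S₀.biUnion F with hS₁
    have hS₁sub : ↑S₁ ⊆ classC 𝒜 := by
      intro X hX
      simp only [hS₁, Finset.coe_biUnion, mem_iUnion, Finset.mem_coe] at hX
      obtain ⟨E, hE, hXE⟩ := hX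
      exact (hFspec E hE).1 hXE
    have hmemsub : ∀ E ∈ S₀, ∀ X ∈ F E, X ⊆ E \ D := by
      intro E hE X hX x hx
      rw [← (hFspec E hE).2.2]
      exact ⟨X, hX, hx⟩
    have hS₁dis : (↑S₁ : Set (Set T)).Pairwise Disjoint := by
      intro X hX Y hY hXY
      simp only [hS₁, Finset.coe_biUnion, mem_iUnion, Finset.mem_coe] at hX hY
      obtain ⟨E₁, hE₁, hXE⟩ := hX
      obtain ⟨E₂, hE₂, hYE⟩ := hY
      by_cases hE : E₁ = E₂
      · subst hE
        exact (hFspec E₁ hE₁).2.1 hXE hYE hXY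
      · exact Set.disjoint_left.2 fun x hx hx' =>
          Set.disjoint_left.1 (h2 hE₁ hE₂ hE) ((hmemsub E₁ hE₁ X hXE hx).1)
            ((hmemsub E₂ hE₂ Y hYE hx').1)
    have hS₁un : ⋃₀ ↑S₁ = ⋃₀ ↑S₀ \ D := by
      ext x
      simp only [hS₁, Finset.coe_biUnion, Finset.mem_coe, mem_sUnion, mem_iUnion, mem_diff]
      constructor
      · rintro ⟨X, ⟨E, hE, hXE⟩, hx⟩
        have := hmemsub E hE X hXE hx
        exact ⟨⟨E, hE, this.1⟩, this.2⟩
      · rintro ⟨⟨E, hE, hx⟩, hxD⟩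
        have : x ∈ ⋃₀ ↑(F E) := by rw [(hFspec E hE).2.2]; exact ⟨hx, hxD⟩
        obtain ⟨X, hXE, hxX⟩ := this
        exact ⟨X, ⟨E, hE, hXE⟩, hxX⟩
    obtain ⟨S, hSsub, hSdis, hSun⟩ := ih hSd' S₁ hS₁sub hS₁dis
    refine ⟨S, hSsub, hSdis, ?_⟩
    rw [hSun, hS₁un]
    ext x
    simp only [mem_diff, Finset.coe_insert, sUnion_insert, mem_union]
    tauto

/-- Full disjointification: every finite union of `classC` sets is a disjoint finite union. -/
lemma disjointify (hinter : ∀ A ∈ 𝒜, ∀ B ∈ 𝒜, A ∩ B ∈ 𝒜)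
    (S : Finset (Set T)) (hS : ↑S ⊆ classC 𝒜) :
    ∃ S' : Finset (Set T), ↑S' ⊆ classC 𝒜 ∧ (↑S' : Set (Set T)).Pairwise Disjoint ∧
      ⋃₀ ↑S' = ⋃₀ (↑S : Set (Set T)) := by
  classical
  induction S using Finset.induction_on with
  | empty => exact ⟨∅, by simp, by simp, by simp⟩
  | @insert C S hCnot ih =>
    have hC : C ∈ classC 𝒜 := hS (by simp)
    have hS' : ↑S ⊆ classC 𝒜 := fun X hX => hS (by simp [hX])
    obtain ⟨S₁, h1, h2, h3⟩ := ih hS'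
    obtain ⟨S₂, g1, g2, g3⟩ := sdiff_partition hinter S₁ h1 {C}
      (by simpa using hC) (by simp)
    have hS₂sub : ∀ X ∈ S₂, X ⊆ C \ ⋃₀ ↑S₁ := by
      intro X hX x hx
      have : x ∈ ⋃₀ ↑S₂ := ⟨X, hX, hx⟩
      rw [g3] at this
      simpa using this
    refine ⟨S₁ ∪ S₂, ?_, ?_, ?_⟩
    · intro X hX
      rcases Finset.mem_union.1 hX with hX | hX
      · exact h1 hX
      · exact g1 hX
    · intro X hX Y hY hXY
      simp only [Finset.coe_union, mem_union, Finset.mem_coe] at hX hY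
      have hsub1 : ∀ Z ∈ S₁, Z ⊆ ⋃₀ ↑S₁ := fun Z hZ x hx => ⟨Z, hZ, hx⟩
      rcases hX with hX | hX <;> rcases hY with hY | hY
      · exact h2 hX hY hXY
      · exact Set.disjoint_left.2 fun x hx hx' => (hS₂sub Y hY hx').2 (hsub1 X hX hx)
      · exact Set.disjoint_left.2 fun x hx hx' => (hS₂sub X hX hx).2 (hsub1 Y hY hx')
      · exact g2 hX hY hXY
    · rw [Finset.coe_union, sUnion_union, g3, Finset.coe_insert, sUnion_insert, h3]
      ext x
      simp only [mem_union, mem_diff, Finset.coe_singleton, sUnion_singleton]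
      tauto

end Disj2

section Uniq

variable {T : Type*} {𝒜 : Set (Set T)} {h : Set T → ℝ} {Δ : Set T → ℝ}

/-- `Δ (A \ ⋃₀ S) = h A - Δ (⋃₀ (S.image (A ∩ ·)))` for `A ∈ 𝒜`, `S ⊆ 𝒜`. -/
lemma delta_sdiff [DecidableEq (Set T)]
    (hinter : ∀ A ∈ 𝒜, ∀ B ∈ 𝒜, A ∩ B ∈ 𝒜)
    (hΔA : ∀ A ∈ 𝒜, Δ A = h A)
    (hadd : ∀ U₁ ∈ classCu 𝒜, ∀ U₂ ∈ classCu 𝒜, Disjoint U₁ U₂ →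
      Δ (U₁ ∪ U₂) = Δ U₁ + Δ U₂)
    {A : Set T} (hA : A ∈ 𝒜) {S : Finset (Set T)} (hS : ↑S ⊆ 𝒜) :
    Δ (A \ ⋃₀ ↑S) = h A - Δ (⋃₀ ↑(S.image (fun B => A ∩ B))) := by
  have himg : ↑(S.image (fun B => A ∩ B)) ⊆ 𝒜 := by
    intro X hX
    simp only [Finset.coe_image, mem_image, Finset.mem_coe] at hX
    obtain ⟨B, hB, rfl⟩ := hX
    exact hinter A hA B (hS hB)
  have himgU : ⋃₀ ↑(S.image (fun B => A ∩ B)) = A ∩ ⋃₀ ↑S := by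
    ext x
    simp only [Finset.coe_image, sUnion_image, mem_iUnion, Finset.mem_coe,
      mem_inter_iff, mem_sUnion]
    constructor
    · rintro ⟨B, hB, hx, hxB⟩
      exact ⟨hx, B, hB, hxB⟩
    · rintro ⟨hx, B, hB, hxB⟩
      exact ⟨B, hB, hx, hxB⟩
  have hsplit : A = (A \ ⋃₀ ↑S) ∪ ⋃₀ ↑(S.image (fun B => A ∩ B)) := by
    rw [himgU]
    ext x
    simp only [mem_union, mem_diff, mem_inter_iff]
    tauto
  have h1 : A \ ⋃₀ ↑S ∈ classCu 𝒜 :=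
    classC_subset_classCu (sdiff_sUnion_mem_classC hA hS)
  have h2 : ⋃₀ ↑(S.image (fun B => A ∩ B)) ∈ classCu 𝒜 :=
    sUnion_mem_classCu (fun X hX => mem_classC_of_A (himg hX))
  have hdisj : Disjoint (A \ ⋃₀ ↑S) (⋃₀ ↑(S.image (fun B => A ∩ B))) := by
    rw [himgU]
    exact Set.disjoint_left.2 fun x hx hx' => hx.2 hx'.2
  have := hadd _ h1 _ h2 hdisj
  rw [← hsplit] at this
  rw [hΔA A hA] at this
  linarith

/-- Step A: any two increment maps agree on finite unions of elements of `𝒜`. -/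
lemma stepA [DecidableEq (Set T)]
    (hempty : (∅ : Set T) ∈ 𝒜)
    (hinter : ∀ A ∈ 𝒜, ∀ B ∈ 𝒜, A ∩ B ∈ 𝒜)
    {Δ₁ Δ₂ : Set T → ℝ}
    (h1A : ∀ A ∈ 𝒜, Δ₁ A = h A)
    (h1add : ∀ U₁ ∈ classCu 𝒜, ∀ U₂ ∈ classCu 𝒜, Disjoint U₁ U₂ →
      Δ₁ (U₁ ∪ U₂) = Δ₁ U₁ + Δ₁ U₂)
    (h2A : ∀ A ∈ 𝒜, Δ₂ A = h A)
    (h2add : ∀ U₁ ∈ classCu 𝒜, ∀ U₂ ∈ classCu 𝒜, Disjoint U₁ U₂ →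
      Δ₂ (U₁ ∪ U₂) = Δ₂ U₁ + Δ₂ U₂) :
    ∀ (n : ℕ) (S : Finset (Set T)), S.card ≤ n → ↑S ⊆ 𝒜 →
      Δ₁ (⋃₀ ↑S) = Δ₂ (⋃₀ ↑S) := by
  intro n
  induction n with
  | zero =>
    intro S hcard hS
    have : S = ∅ := Finset.card_eq_zero.1 (Nat.le_zero.1 hcard)
    subst this
    simp only [Finset.coe_empty, sUnion_empty]
    rw [h1A ∅ hempty, h2A ∅ hempty]
  | succ n ih =>
    intro S hcard hS
    rcases S.eq_empty_or_nonempty with rfl | hSne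
    · simp only [Finset.coe_empty, sUnion_empty]
      rw [h1A ∅ hempty, h2A ∅ hempty]
    obtain ⟨A, hA⟩ := hSne
    have hAmem : A ∈ 𝒜 := hS hA
    set S' : Finset (Set T) := S.erase A with hS'def
    have hS'sub : ↑S' ⊆ 𝒜 := fun X hX => hS (Finset.mem_of_mem_erase hX)
    have hS'card : S'.card ≤ n := by
      have h1 : S'.card = S.card - 1 := by
        rw [hS'def]; exact Finset.card_erase_of_mem hA
      have h2 : 0 < S.card := Finset.card_pos.2 ⟨A, hA⟩
      omega
    have hsplitS : ⋃₀ ↑S = (A \ ⋃₀ ↑S') ∪ ⋃₀ ↑S' := by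
      ext x
      simp only [mem_union, mem_diff, mem_sUnion, Finset.mem_coe]
      constructor
      · rintro ⟨B, hB, hxB⟩
        by_cases hx' : ∃ B' ∈ S', x ∈ B'
        · exact Or.inr hx'
        · rcases eq_or_ne B A with rfl | hBA
          · exact Or.inl ⟨hxB, hx'⟩
          · exact absurd ⟨B, Finset.mem_erase.2 ⟨hBA, hB⟩, hxB⟩ hx'
      · rintro (⟨hxA, _⟩ | ⟨B, hB, hxB⟩)
        · exact ⟨A, hA, hxA⟩
        · exact ⟨B, Finset.mem_of_mem_erase hB, hxB⟩
    have hmem1 : A \ ⋃₀ ↑S' ∈ classCu 𝒜 :=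
      classC_subset_classCu (sdiff_sUnion_mem_classC hAmem hS'sub)
    have hmem2 : ⋃₀ ↑S' ∈ classCu 𝒜 :=
      sUnion_mem_classCu (fun X hX => mem_classC_of_A (hS'sub hX))
    have hdisj : Disjoint (A \ ⋃₀ ↑S') (⋃₀ ↑S') :=
      Set.disjoint_left.2 fun x hx hx' => hx.2 hx'
    have e1 : Δ₁ (⋃₀ ↑S) = Δ₁ (A \ ⋃₀ ↑S') + Δ₁ (⋃₀ ↑S') := by
      rw [hsplitS]; exact h1add _ hmem1 _ hmem2 hdisj
    have e2 : Δ₂ (⋃₀ ↑S) = Δ₂ (A \ ⋃₀ ↑S') + Δ₂ (⋃₀ ↑S') := by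
      rw [hsplitS]; exact h2add _ hmem1 _ hmem2 hdisj
    have eS' : Δ₁ (⋃₀ ↑S') = Δ₂ (⋃₀ ↑S') := ih S' hS'card hS'sub
    have himgcard : (S'.image (fun B => A ∩ B)).card ≤ n :=
      le_trans (Finset.card_image_le) hS'card
    have himgsub : ↑(S'.image (fun B => A ∩ B)) ⊆ 𝒜 := by
      intro X hX
      simp only [Finset.coe_image, mem_image, Finset.mem_coe] at hX
      obtain ⟨B, hB, rfl⟩ := hX
      exact hinter A hAmem B (hS'sub hB)
    have eimg : Δ₁ (⋃₀ ↑(S'.image (fun B => A ∩ B))) =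
        Δ₂ (⋃₀ ↑(S'.image (fun B => A ∩ B))) := ih _ himgcard himgsub
    have d1 := delta_sdiff hinter h1A h1add hAmem hS'sub
    have d2 := delta_sdiff hinter h2A h2add hAmem hS'sub
    rw [e1, e2, d1, d2, eS', eimg]

end Uniq

section Uniq2

variable {T : Type*} {𝒜 : Set (Set T)} {h : Set T → ℝ}

/-- Step B: two increment maps agree on `classC`. -/
lemma stepB [DecidableEq (Set T)]
    (hempty : (∅ : Set T) ∈ 𝒜)
    (hinter : ∀ A ∈ 𝒜, ∀ B ∈ 𝒜, A ∩ B ∈ 𝒜)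
    {Δ₁ Δ₂ : Set T → ℝ}
    (h1A : ∀ A ∈ 𝒜, Δ₁ A = h A)
    (h1add : ∀ U₁ ∈ classCu 𝒜, ∀ U₂ ∈ classCu 𝒜, Disjoint U₁ U₂ →
      Δ₁ (U₁ ∪ U₂) = Δ₁ U₁ + Δ₁ U₂)
    (h2A : ∀ A ∈ 𝒜, Δ₂ A = h A)
    (h2add : ∀ U₁ ∈ classCu 𝒜, ∀ U₂ ∈ classCu 𝒜, Disjoint U₁ U₂ →
      Δ₂ (U₁ ∪ U₂) = Δ₂ U₁ + Δ₂ U₂)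
    {C : Set T} (hC : C ∈ classC 𝒜) : Δ₁ C = Δ₂ C := by
  obtain ⟨A₀, hA₀, l, hl, rfl⟩ := classC_elim hC
  have hLT : (⋃ B ∈ l, B) = ⋃₀ ↑l.toFinset := by
    ext x; simp
  rw [hLT]
  have hsub : ↑l.toFinset ⊆ 𝒜 := by
    intro B hB
    exact hl B (by simpa using hB)
  have d1 := delta_sdiff (h := h) hinter h1A h1add hA₀ hsub
  have d2 := delta_sdiff (h := h) hinter h2A h2add hA₀ hsub
  rw [d1, d2]
  have := stepA (h := h) hempty hinter h1A h1add h2A h2add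
    (l.toFinset.image (fun B => A₀ ∩ B)).card _ le_rfl (by
      intro X hX
      simp only [Finset.coe_image, mem_image, Finset.mem_coe] at hX
      obtain ⟨B, hB, rfl⟩ := hX
      exact hinter A₀ hA₀ B (hsub hB))
  rw [this]

/-- Sum formula for an increment map over a pairwise disjoint finite family in `classC`. -/
lemma delta_sum [DecidableEq (Set T)]
    (hempty : (∅ : Set T) ∈ 𝒜)
    {Δ : Set T → ℝ}
    (hΔA : ∀ A ∈ 𝒜, Δ A = h A)
    (hadd : ∀ U₁ ∈ classCu 𝒜, ∀ U₂ ∈ classCu 𝒜, Disjoint U₁ U₂ →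
      Δ (U₁ ∪ U₂) = Δ U₁ + Δ U₂)
    (hh : h ∅ = 0) :
    ∀ S : Finset (Set T), ↑S ⊆ classC 𝒜 → (↑S : Set (Set T)).Pairwise Disjoint →
      Δ (⋃₀ ↑S) = ∑ C ∈ S, Δ C := by
  classical
  intro S
  induction S using Finset.induction_on with
  | empty =>
    intro _ _
    simp only [Finset.coe_empty, sUnion_empty, Finset.sum_empty]
    rw [hΔA ∅ hempty, hh]
  | @insert C S hCnot ih =>
    intro hsub hdis
    have hC : C ∈ classC 𝒜 := hsub (by simp)
    have hSsub : ↑S ⊆ classC 𝒜 := fun X hX => hsub (by simp [hX])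
    have hSdis : (↑S : Set (Set T)).Pairwise Disjoint :=
      hdis.mono (by simp only [Finset.coe_insert]; exact subset_insert _ _)
    have hdisj : Disjoint C (⋃₀ ↑S) := by
      rw [Set.disjoint_sUnion_right]
      intro D hD
      have hDC : D ≠ C := fun e => hCnot (e ▸ hD)
      exact hdis (by simp) (by simp [hD]) (Ne.symm hDC)
    have e : ⋃₀ ↑(insert C S) = C ∪ ⋃₀ ↑S := by
      simp [Finset.coe_insert, sUnion_insert]
    rw [e, hadd C (classC_subset_classCu hC) _ (sUnion_mem_classCu hSsub) hdisj,
      ih hSsub hSdis, Finset.sum_insert hCnot]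

/-- Step C: two increment maps agree on `classCu`. -/
lemma stepC [DecidableEq (Set T)]
    (hempty : (∅ : Set T) ∈ 𝒜)
    (hinter : ∀ A ∈ 𝒜, ∀ B ∈ 𝒜, A ∩ B ∈ 𝒜)
    (hh : h ∅ = 0)
    {Δ₁ Δ₂ : Set T → ℝ}
    (h1A : ∀ A ∈ 𝒜, Δ₁ A = h A)
    (h1add : ∀ U₁ ∈ classCu 𝒜, ∀ U₂ ∈ classCu 𝒜, Disjoint U₁ U₂ →
      Δ₁ (U₁ ∪ U₂) = Δ₁ U₁ + Δ₁ U₂)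
    (h2A : ∀ A ∈ 𝒜, Δ₂ A = h A)
    (h2add : ∀ U₁ ∈ classCu 𝒜, ∀ U₂ ∈ classCu 𝒜, Disjoint U₁ U₂ →
      Δ₂ (U₁ ∪ U₂) = Δ₂ U₁ + Δ₂ U₂)
    {U : Set T} (hU : U ∈ classCu 𝒜) : Δ₁ U = Δ₂ U := by
  obtain ⟨S, hSsub, rfl⟩ := classCu_iff_finset.1 hU
  obtain ⟨S', h1, h2, h3⟩ := disjointify hinter S hSsub
  rw [← h3]
  rw [delta_sum (h := h) hempty h1A h1add hh S' h1 h2,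
    delta_sum (h := h) hempty h2A h2add hh S' h1 h2]
  exact Finset.sum_congr rfl fun C hC =>
    stepB (h := h) hempty hinter h1A h1add h2A h2add (h1 hC)

end Uniq2

section Exist

variable {T : Type*} {𝒜 : Set (Set T)}

noncomputable def myInd (A : Set T) : T → ℝ := A.indicator 1

lemma myInd_apply_mem {A : Set T} {t : T} (ht : t ∈ A) : myInd A t = 1 := by
  simp [myInd, Set.indicator_of_mem ht]

lemma myInd_apply_not_mem {A : Set T} {t : T} (ht : t ∉ A) : myInd A t = 0 := by
  simp [myInd, Set.indicator_of_notMem ht]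

lemma myInd_level {A : Set T} : {t | myInd A t = 1} = A := by
  ext t
  by_cases ht : t ∈ A
  · simp [myInd_apply_mem ht, ht]
  · simp [myInd_apply_not_mem ht, ht]

/-- Finset version of SHAPE. -/
lemma shape' (hshape : ∀ (n : ℕ) (A : Set T) (As : Fin (n + 1) → Set T),
      A ∈ 𝒜 \ {∅} → (∀ i, As i ∈ 𝒜 \ {∅}) → A ⊆ ⋃ i, As i → ∃ j, A ⊆ As j)
    {A : Set T} (hA : A ∈ 𝒜 \ {∅}) {S : Finset (Set T)} (hS : ↑S ⊆ 𝒜 \ {∅})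
    (hsub : A ⊆ ⋃₀ ↑S) : ∃ B ∈ S, A ⊆ B := by
  have hAne : A ≠ ∅ := hA.2
  have hSne : S.Nonempty := by
    rcases S.eq_empty_or_nonempty with rfl | hne
    · simp only [Finset.coe_empty, sUnion_empty, subset_empty_iff] at hsub
      exact absurd hsub hAne
    · exact hne
  obtain ⟨n, hn⟩ : ∃ n, S.card = n + 1 := by
    have := Finset.card_pos.2 hSne
    exact ⟨S.card - 1, by omega⟩
  set As : Fin (n + 1) → Set T := fun i => (S.equivFin.symm (Fin.cast hn.symm i) : Set T)
    with hAs
  have hAsmem : ∀ i, As i ∈ 𝒜 \ {∅} := fun i => hS (S.equivFin.symm _).2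
  have hAsUn : (⋃ i, As i) = ⋃₀ ↑S := by
    ext x
    simp only [mem_iUnion, mem_sUnion, Finset.mem_coe]
    constructor
    · rintro ⟨i, hx⟩
      exact ⟨_, (S.equivFin.symm _).2, hx⟩
    · rintro ⟨B, hB, hx⟩
      refine ⟨Fin.cast hn (S.equivFin ⟨B, hB⟩), ?_⟩
      simp only [hAs, Fin.cast_cast, Fin.cast_eq_self]
      simpa using hx
  obtain ⟨j, hj⟩ := hshape n A As hA hAsmem (by rw [hAsUn]; exact hsub)
  exact ⟨As j, (S.equivFin.symm (Fin.cast hn.symm j)).2, hj⟩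

end Exist

section Exist2

variable {T : Type*} {𝒜 : Set (Set T)}

lemma linIndep_aux
    (hshape : ∀ (n : ℕ) (A : Set T) (As : Fin (n + 1) → Set T),
      A ∈ 𝒜 \ {∅} → (∀ i, As i ∈ 𝒜 \ {∅}) → A ⊆ ⋃ i, As i → ∃ j, A ⊆ As j) :
    ∀ (n : ℕ) (fs : Finset ↥(𝒜 \ {∅})), fs.card ≤ n →
      ∀ g : ↥(𝒜 \ {∅}) → ℝ, (∑ i ∈ fs, g i • myInd (i : Set T)) = 0 →
      ∀ i ∈ fs, g i = 0 := by
  classical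
  intro n
  induction n with
  | zero =>
    intro fs hcard g hsum i hi
    have : fs = ∅ := Finset.card_eq_zero.1 (Nat.le_zero.1 hcard)
    subst this
    exact absurd hi (by simp)
  | succ n ih =>
    intro fs hcard g hsum i hi
    have hfsne : fs.Nonempty := ⟨i, hi⟩
    set M : Finset (Set T) := fs.image (fun j : ↥(𝒜 \ {∅}) => (j : Set T)) with hM
    have hMne : M.Nonempty := by rw [hM]; exact hfsne.image (fun j : ↥(𝒜 \ {∅}) => (j : Set T))
    obtain ⟨Amax, hAmaxM, hmax⟩ := M.exists_maximal hMne
    obtain ⟨istar, histar, hcoe⟩ := Finset.mem_image.1 hAmaxM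
    set others : Finset (Set T) := M.erase Amax with hoth
    have hothers : ↑others ⊆ 𝒜 \ {∅} := by
      intro X hX
      have hXM : X ∈ M := Finset.mem_of_mem_erase hX
      obtain ⟨j, _, rfl⟩ := Finset.mem_image.1 hXM
      exact j.2
    have hAmax : Amax ∈ 𝒜 \ {∅} := hcoe ▸ istar.2
    by_cases hsub : Amax ⊆ ⋃₀ ↑others
    · obtain ⟨B, hBoth, hAB⟩ := shape' hshape hAmax hothers hsub
      have hBne : Amax ≠ B := fun e => (Finset.mem_erase.1 hBoth).1 e.symm
      exact absurd (subset_antisymm hAB (hmax (Finset.mem_of_mem_erase hBoth) hAB)) hBne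
    · obtain ⟨t, htA, htoth⟩ := not_subset.1 hsub
      have hval := congrFun hsum t
      have hsum_t : ∑ j ∈ fs, g j * myInd (j : Set T) t = 0 := by
        simpa using hval
      have hterm : ∀ j ∈ fs, j ≠ istar → g j * myInd (j : Set T) t = 0 := by
        intro j hj hji
        have hjM : (j : Set T) ∈ M := Finset.mem_image.2 ⟨j, hj, rfl⟩
        have hjA : (j : Set T) ≠ Amax := by
          intro e
          exact hji (Subtype.coe_injective (e.trans hcoe.symm))
        have : (j : Set T) ∈ others := Finset.mem_erase.2 ⟨hjA, hjM⟩
        have htj : t ∉ (j : Set T) := fun ht => htoth ⟨_, this, ht⟩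
        rw [myInd_apply_not_mem htj, mul_zero]
      have hgstar : g istar = 0 := by
        have := Finset.sum_eq_single istar hterm (fun hni => absurd histar hni)
        rw [this] at hsum_t
        rwa [hcoe, myInd_apply_mem htA, mul_one] at hsum_t
      have hsum' : (∑ j ∈ fs.erase istar, g j • myInd (j : Set T)) = 0 := by
        have : g istar • myInd (istar : Set T) = 0 := by
          rw [hgstar, zero_smul]
        rw [Finset.sum_erase (f := fun j : ↥(𝒜 \ {∅}) => g j • myInd (j : Set T)) fs this]
        exact hsum
      have hcard' : (fs.erase istar).card ≤ n := by
        have h1 : (fs.erase istar).card = fs.card - 1 := Finset.card_erase_of_mem histar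
        have h2 : 0 < fs.card := Finset.card_pos.2 hfsne
        omega
      rcases eq_or_ne i istar with rfl | hne
      · exact hgstar
      · exact ih (fs.erase istar) hcard' g hsum' i (Finset.mem_erase.2 ⟨hne, hi⟩)

lemma linIndep
    (hshape : ∀ (n : ℕ) (A : Set T) (As : Fin (n + 1) → Set T),
      A ∈ 𝒜 \ {∅} → (∀ i, As i ∈ 𝒜 \ {∅}) → A ⊆ ⋃ i, As i → ∃ j, A ⊆ As j) :
    LinearIndependent ℝ ((↑) : ↥(myInd '' (𝒜 \ {∅})) → (T → ℝ)) := by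
  have h1 : LinearIndependent ℝ (fun A : ↥(𝒜 \ {∅}) => myInd (A : Set T)) := by
    rw [linearIndependent_iff']
    intro fs g hsum i hi
    exact linIndep_aux hshape fs.card fs le_rfl g hsum i hi
  have h2 := (linearIndepOn_id_range_iff h1.injective).mpr h1
  rwa [← Set.image_eq_range] at h2

end Exist2

/-- **Existence and uniqueness of the increment map.**
If `∅ ∈ 𝒜`, `𝒜` is closed under binary intersections, `𝒜 \ {∅}` satisfies SHAPE, and
`h ∅ = 0`, then there is a map `Δ : Set T → ℝ` extending `h` on `𝒜` that is additive on
disjoint elements of `𝒞(u)`; moreover any two such maps agree on `𝒞(u)`. -/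
theorem stmt_2 {T : Type*} (𝒜 : Set (Set T)) (h : Set T → ℝ)
    (hempty : (∅ : Set T) ∈ 𝒜)
    (hinter : ∀ A ∈ 𝒜, ∀ B ∈ 𝒜, A ∩ B ∈ 𝒜)
    (hshape : ∀ (n : ℕ) (A : Set T) (As : Fin (n + 1) → Set T),
      A ∈ 𝒜 \ {∅} → (∀ i, As i ∈ 𝒜 \ {∅}) → A ⊆ ⋃ i, As i → ∃ j, A ⊆ As j)
    (hh : h ∅ = 0) :
    (∃ Δ : Set T → ℝ,
      (∀ A ∈ 𝒜, Δ A = h A) ∧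
      (∀ U₁ ∈ classCu 𝒜, ∀ U₂ ∈ classCu 𝒜, Disjoint U₁ U₂ →
        Δ (U₁ ∪ U₂) = Δ U₁ + Δ U₂)) ∧
    (∀ Δ₁ Δ₂ : Set T → ℝ,
      ((∀ A ∈ 𝒜, Δ₁ A = h A) ∧
        (∀ U₁ ∈ classCu 𝒜, ∀ U₂ ∈ classCu 𝒜, Disjoint U₁ U₂ →
          Δ₁ (U₁ ∪ U₂) = Δ₁ U₁ + Δ₁ U₂)) →
      ((∀ A ∈ 𝒜, Δ₂ A = h A) ∧
        (∀ U₁ ∈ classCu 𝒜, ∀ U₂ ∈ classCu 𝒜, Disjoint U₁ U₂ →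
          Δ₂ (U₁ ∪ U₂) = Δ₂ U₁ + Δ₂ U₂)) →
      ∀ U ∈ classCu 𝒜, Δ₁ U = Δ₂ U) := by
  classical
  constructor
  · -- existence
    have li : LinearIndepOn ℝ id (myInd '' (𝒜 \ {∅})) := linIndep (𝒜 := 𝒜) hshape
    set b := Module.Basis.extend li with hb
    set g0 : ↥(li.extend (Set.subset_univ _)) → ℝ :=
      fun x => h {t | (x : T → ℝ) t = 1} with hg0
    set f : (T → ℝ) →ₗ[ℝ] ℝ := b.constr ℝ g0 with hf
    refine ⟨fun U => f (myInd U), ?_, ?_⟩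
    · intro A hA
      show f (myInd A) = h A
      rcases eq_or_ne A ∅ with rfl | hAne
      · have hz : myInd (∅ : Set T) = 0 := by
          funext t; simp [myInd]
        rw [hz, map_zero, hh]
      · have hmem : myInd A ∈ myInd '' (𝒜 \ {∅}) := ⟨A, ⟨hA, hAne⟩, rfl⟩
        have hmemext : myInd A ∈ li.extend (Set.subset_univ _) :=
          li.subset_extend _ hmem
        have hbx : b ⟨myInd A, hmemext⟩ = myInd A := Module.Basis.extend_apply_self li _
        have hcb := b.constr_basis ℝ g0 ⟨myInd A, hmemext⟩
        rw [hbx] at hcb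
        rw [show f = b.constr ℝ g0 from hf, hcb, hg0]
        simp only
        rw [myInd_level]
    · intro U₁ _ U₂ _ hdis
      show f (myInd (U₁ ∪ U₂)) = f (myInd U₁) + f (myInd U₂)
      have : myInd (U₁ ∪ U₂) = myInd U₁ + myInd U₂ := by
        simp only [myInd]
        exact Set.indicator_union_of_disjoint hdis 1
      rw [this, map_add]
  · -- uniqueness
    rintro Δ₁ Δ₂ ⟨h1A, h1add⟩ ⟨h2A, h2add⟩ U hU
    exact stepC (h := h) hempty hinter hh h1A h1add h2A h2add hU
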